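/- arXiv:1710.04146 — 2 statements merged into one kernel-verified Lean document; each statement's English description precedes it below -/
import Mathlib

section
/- Let d be a positive integer, let Box ⊆ ℝ^d be a full-dimensional lattice polytope with 0 in its interior, and let f be an integral concave piecewise-affine function on Box which is at height one. Suppose f(x) = 1 for every point x ∈ Box lying on a coordinate axis, i.e., for every x ∈ Box of the form x = α·e_j with α ∈ ℝ and e_j a standard basis vector. Then f(x) = 1 for all x ∈ Box. -/
open scoped BigOperators

noncomputable section

/-- Embedding of a lattice point of `ℤ^d × ℤ` into `ℝ^d × ℝ`. -/
def latticeEmbed (d : ℕ) (p : (Fin d → ℤ) × ℤ) : (Fin d → ℝ) × ℝ :=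
  (fun i => (p.1 i : ℝ), (p.2 : ℝ))

/-- `Box ⊆ ℝ^d` is a lattice polytope: the convex hull of a finite set of lattice points. -/
def IsLatticePolytope (d : ℕ) (Box : Set (Fin d → ℝ)) : Prop :=
  ∃ S : Finset (Fin d → ℤ),
    Box = convexHull ℝ ((fun v : Fin d → ℤ => fun i => (v i : ℝ)) '' (S : Set (Fin d → ℤ)))

/-- The pairing of `x ∈ ℝ^d` with an integral vector `u ∈ ℤ^d`. -/
def dotZ (d : ℕ) (x : Fin d → ℝ) (u : Fin d → ℤ) : ℝ := ∑ i, x i * (u i : ℝ)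

/-- `f` is an integral concave piecewise-affine function on `Box`: there is a finite set
`S ⊆ ℤ^d × ℤ` such that `Box` is the projection of `conv S` and `f x` is the largest `t`
with `(x, t) ∈ conv S`. -/
def IsICPA (d : ℕ) (Box : Set (Fin d → ℝ)) (f : (Fin d → ℝ) → ℝ) : Prop :=
  ∃ S : Finset ((Fin d → ℤ) × ℤ),
    Prod.fst '' (convexHull ℝ (latticeEmbed d '' (S : Set ((Fin d → ℤ) × ℤ)))) = Box ∧
    ∀ x ∈ Box,
      IsGreatest {t : ℝ | (x, t) ∈ convexHull ℝ (latticeEmbed d '' (S : Set ((Fin d → ℤ) × ℤ)))}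
        (f x)

/-- Every facet of the graph of `f` lies at height one. -/
def AtHeightOne (d : ℕ) (Box : Set (Fin d → ℝ)) (f : (Fin d → ℝ) → ℝ) : Prop :=
  ∀ x ∈ Box, ∃ (u : Fin d → ℤ) (m : ℤ),
    |dotZ d x u + (m : ℝ) * f x| = 1 ∧
    ∀ y ∈ Box, dotZ d y u + (m : ℝ) * f y ≤ dotZ d x u + (m : ℝ) * f x

/-- A combinatorial divisorial polytope (CDP) with base in `ℝ^d`. -/
structure CDP (d : ℕ) where
  box : Set (Fin d → ℝ)
  funcs : List ((Fin d → ℝ) → ℝ)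
  lattice : IsLatticePolytope d box
  fullDim : (interior box).Nonempty
  icpa : ∀ f ∈ funcs, IsICPA d box f
  posSum : ∀ x ∈ interior box, 0 < (funcs.map (fun f => f x)).sum

/-- Two functions agree on a set. -/
def EqOnBox (d : ℕ) (B : Set (Fin d → ℝ)) (f g : (Fin d → ℝ) → ℝ) : Prop :=
  ∀ x ∈ B, f x = g x

/-- Move (i): addition of the zero function. -/
def MoveZero (d : ℕ) (P Q : CDP d) : Prop :=
  Q.box = P.box ∧
    List.Forall₂ (EqOnBox d P.box) Q.funcs (P.funcs ++ [fun _ => (0 : ℝ)])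

/-- Move (ii): permutation of the functions. -/
def MovePerm (d : ℕ) (P Q : CDP d) : Prop :=
  Q.box = P.box ∧ ∃ L, List.Perm L P.funcs ∧ List.Forall₂ (EqOnBox d P.box) Q.funcs L

/-- Move (iii): integral affine transformation of the base. -/
def MoveAffine (d : ℕ) (P Q : CDP d) : Prop :=
  ∃ (A B : Matrix (Fin d) (Fin d) ℤ) (t : Fin d → ℤ),
    A * B = 1 ∧ B * A = 1 ∧
    Q.box = (fun x : Fin d → ℝ => fun i => (∑ j, (A i j : ℝ) * x j) + (t i : ℝ)) '' P.box ∧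
    List.Forall₂ (EqOnBox d Q.box) Q.funcs
      (P.funcs.map (fun f => f ∘ fun x : Fin d → ℝ => fun i => ∑ j, (B i j : ℝ) * (x j - (t j : ℝ))))

/-- Move (iv): translation by integers summing to zero. -/
def MoveTranslate (d : ℕ) (P Q : CDP d) : Prop :=
  Q.box = P.box ∧ ∃ α : List ℤ, α.length = P.funcs.length ∧ α.sum = 0 ∧
    List.Forall₂ (EqOnBox d P.box) Q.funcs
      (List.zipWith (fun f (a : ℤ) => fun x => f x + (a : ℝ)) P.funcs α)

/-- Move (v): shearing by a covector with integral coefficients summing to zero. -/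
def MoveShear (d : ℕ) (P Q : CDP d) : Prop :=
  Q.box = P.box ∧ ∃ (v : Fin d → ℤ) (β : List ℤ), β.length = P.funcs.length ∧ β.sum = 0 ∧
    List.Forall₂ (EqOnBox d P.box) Q.funcs
      (List.zipWith (fun f (b : ℤ) => fun x => f x + (b : ℝ) * dotZ d x v) P.funcs β)

/-- One elementary move between CDPs. -/
def CDPMove (d : ℕ) (P Q : CDP d) : Prop :=
  MoveZero d P Q ∨ MovePerm d P Q ∨ MoveAffine d P Q ∨ MoveTranslate d P Q ∨ MoveShear d P Q

/-- Equivalence of CDPs: the smallest equivalence relation generated by the moves. -/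
def CDPEquiv (d : ℕ) : CDP d → CDP d → Prop := Relation.EqvGen (CDPMove d)

/-- The on-the-nose Fano conditions for a CDP. -/
def IsFanoWitness (d : ℕ) (P : CDP d) : Prop :=
  ∃ a : List ℤ, a.sum = -2 ∧
    (0 : Fin d → ℝ) ∈ interior P.box ∧
    List.Forall₂ (fun f (ai : ℤ) =>
      AtHeightOne d P.box (fun x => f x + (ai : ℝ) + 1) ∧ 0 < f 0 + (ai : ℝ) + 1)
      P.funcs a ∧
    ∀ x ∈ frontier P.box,
      (P.funcs.map (fun f => f x)).sum = 0 ∨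
      ∃ u : Fin d → ℤ, dotZ d x u = 1 ∧ ∀ y ∈ P.box, dotZ d y u ≤ 1

/-- A CDP is Fano if it is equivalent to one satisfying the Fano conditions. -/
def IsFano (d : ℕ) (P : CDP d) : Prop := ∃ Q : CDP d, CDPEquiv d P Q ∧ IsFanoWitness d Q

/-- A CDP is toric if it is equivalent to one with at most two functions. -/
def IsToric (d : ℕ) (P : CDP d) : Prop := ∃ Q : CDP d, CDPEquiv d P Q ∧ Q.funcs.length ≤ 2

/-- `f` agrees on `Box` with an affine function with integral slope and constant. -/
def IsIntegralAffineOn (d : ℕ) (Box : Set (Fin d → ℝ)) (f : (Fin d → ℝ) → ℝ) : Prop :=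
  ∃ (u : Fin d → ℤ) (c : ℤ), ∀ x ∈ Box, f x = dotZ d x u + (c : ℝ)

/-- Normalized Fano data on `Box`: the translated functions `Ψᵢ' = Ψᵢ + aᵢ + 1` of a
normalized Fano CDP. -/
def NormalizedFanoData (d n : ℕ) (Box : Set (Fin d → ℝ))
    (f : Fin n → (Fin d → ℝ) → ℝ) : Prop :=
  (∀ i, IsICPA d Box (f i)) ∧
  (∀ i, AtHeightOne d Box (f i)) ∧
  (∀ i, 0 < f i 0) ∧
  (∀ i, ¬ IsIntegralAffineOn d Box (f i)) ∧
  (∀ x ∈ Box, (n : ℝ) - 2 ≤ ∑ i, f i x) ∧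
  (∀ x ∈ interior Box, (n : ℝ) - 2 < ∑ i, f i x) ∧
  (∀ x ∈ frontier Box,
    (∑ i, f i x) = (n : ℝ) - 2 ∨
    ∃ u : Fin d → ℤ, dotZ d x u = 1 ∧ ∀ y ∈ Box, dotZ d y u ≤ 1)

/-- `α_v = min{1, max{α ≥ 0 : ±αv ∈ Box}}`. -/
def alphaV (d : ℕ) (Box : Set (Fin d → ℝ)) (v : Fin d → ℤ) : ℝ :=
  min 1 (sSup {α : ℝ | 0 ≤ α ∧ (fun i => α * (v i : ℝ)) ∈ Box ∧
    (fun i => -(α * (v i : ℝ))) ∈ Box})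

/-- A primitive integral vector: the gcd of its coordinates is 1. -/
def IsPrimitive (d : ℕ) (v : Fin d → ℤ) : Prop := Finset.univ.gcd v = 1

/-- `f` restricted to `Box ∩ ℝ·v` is affine. -/
def AffineOnLine (d : ℕ) (Box : Set (Fin d → ℝ)) (v : Fin d → ℤ)
    (f : (Fin d → ℝ) → ℝ) : Prop :=
  ∃ s c : ℝ, ∀ t : ℝ, (fun i => t * (v i : ℝ)) ∈ Box →
    f (fun i => t * (v i : ℝ)) = s * t + c

/-- The interval `[a,b]` as a subset of `ℝ¹ = (Fin 1 → ℝ)`. -/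
def intervalBox (a b : ℤ) : Set (Fin 1 → ℝ) := {p : Fin 1 → ℝ | (a : ℝ) ≤ p 0 ∧ p 0 ≤ (b : ℝ)}

/-- The `d`-dimensional cross polytope `conv{±e₁, …, ±e_d}`. -/
def crossPolytope (d : ℕ) : Set (Fin d → ℝ) :=
  convexHull ℝ {x : Fin d → ℝ | ∃ j : Fin d, x = Pi.single j 1 ∨ x = -Pi.single j 1}

-- helpers

lemma dotZ_zero' (d : ℕ) (u : Fin d → ℤ) : dotZ d 0 u = 0 := by simp [dotZ]

lemma dotZ_smul' (d : ℕ) (t : ℝ) (x : Fin d → ℝ) (u : Fin d → ℤ) :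
    dotZ d (t • x) u = t * dotZ d x u := by
  simp [dotZ, Finset.mul_sum, mul_assoc]

lemma dotZ_single' (d : ℕ) (j : Fin d) (α : ℝ) (u : Fin d → ℤ) :
    dotZ d (Pi.single j α) u = α * (u j : ℝ) := by
  classical
  simp [dotZ, Pi.single_apply, ite_mul]

lemma icpa_concave {d : ℕ} {Box : Set (Fin d → ℝ)} {f : (Fin d → ℝ) → ℝ}
    (h : IsICPA d Box f) {x y : Fin d → ℝ} (hx : x ∈ Box) (hy : y ∈ Box)
    {a b : ℝ} (ha : 0 ≤ a) (hb : 0 ≤ b) (hab : a + b = 1) :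
    a * f x + b * f y ≤ f (a • x + b • y) := by
  obtain ⟨S, hproj, hgr⟩ := h
  set P := convexHull ℝ (latticeEmbed d '' (S : Set ((Fin d → ℤ) × ℤ))) with hP
  have hxP : ((x, f x) : (Fin d → ℝ) × ℝ) ∈ P := (hgr x hx).1
  have hyP : ((y, f y) : (Fin d → ℝ) × ℝ) ∈ P := (hgr y hy).1
  have hconv : Convex ℝ P := convex_convexHull ℝ _
  have hcomb := hconv hxP hyP ha hb hab
  have heq : a • ((x, f x) : (Fin d → ℝ) × ℝ) + b • (y, f y)
      = ((a • x + b • y, a * f x + b * f y) : (Fin d → ℝ) × ℝ) := rfl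
  rw [heq] at hcomb
  have hmem : a • x + b • y ∈ Box := by
    rw [← hproj]; exact ⟨_, hcomb, rfl⟩
  exact (hgr _ hmem).2 hcomb



set_option maxHeartbeats 2000000 in
/-- If an integral concave piecewise-affine function at height one equals `1` at every point
of `Box` on a coordinate axis, then it is identically `1` on `Box`. -/
theorem identically_one_of_one_on_axes
    (d : ℕ) (hd : 0 < d) (Box : Set (Fin d → ℝ)) (hlat : IsLatticePolytope d Box)
    (h0 : (0 : Fin d → ℝ) ∈ interior Box)
    (f : (Fin d → ℝ) → ℝ) (hicpa : IsICPA d Box f) (hht : AtHeightOne d Box f)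
    (hax : ∀ x ∈ Box, (∃ (j : Fin d) (α : ℝ), x = Pi.single j α) → f x = 1) :
    ∀ x ∈ Box, f x = 1 := by
  classical
  have hconvBox : Convex ℝ Box := by
    obtain ⟨S₀, hS₀⟩ := hlat; rw [hS₀]; exact convex_convexHull ℝ _
  have h0' : (0 : Fin d → ℝ) ∈ Box := interior_subset h0
  have hf0 : f 0 = 1 := by
    refine hax 0 h0' ⟨⟨0, hd⟩, 0, ?_⟩
    simp
  obtain ⟨ε, hε, hball⟩ : ∃ ε > 0, Metric.ball (0 : Fin d → ℝ) ε ⊆ Box := by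
    have h1 : Box ∈ nhds (0 : Fin d → ℝ) := mem_interior_iff_mem_nhds.mp h0
    exact Metric.mem_nhds_iff.mp h1
  have haxmem : ∀ (j : Fin d) (δ' : ℝ), |δ'| < ε → Pi.single j δ' ∈ Box := by
    intro j δ' hδ'
    apply hball
    simp only [Metric.mem_ball, dist_zero_right, Pi.norm_single, Real.norm_eq_abs]
    exact hδ'
  have haxval : ∀ (j : Fin d) (δ' : ℝ), |δ'| < ε → f (Pi.single j δ') = 1 := by
    intro j δ' hδ'
    exact hax _ (haxmem j δ' hδ') ⟨j, δ', rfl⟩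
  obtain ⟨δ, hδpos, hδlt⟩ : ∃ δ : ℝ, 0 < δ ∧ |δ| < ε :=
    ⟨ε / 2, by positivity, by rw [abs_of_pos (by positivity)]; linarith⟩
  have hδlt' : |(-δ)| < ε := by rw [abs_neg]; exact hδlt
  have hseg : ∀ x ∈ Box, ∀ t : ℝ, 0 ≤ t → t ≤ 1 → t • x ∈ Box := by
    intro x hx t ht0 ht1
    have := hconvBox h0' hx (by linarith : (0:ℝ) ≤ 1 - t) ht0 (by ring)
    simpa using this
  have hnegmem : ∀ x : Fin d → ℝ, ∃ s : ℝ, 0 < s ∧ (-s) • x ∈ Box := by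
    intro x
    refine ⟨ε / (2 * (‖x‖ + 1)), div_pos hε (by positivity), hball ?_⟩
    have hs : 0 < ε / (2 * (‖x‖ + 1)) := div_pos hε (by positivity)
    simp only [Metric.mem_ball, dist_zero_right, norm_smul, Real.norm_eq_abs, abs_neg,
      abs_of_pos hs]
    calc ε / (2 * (‖x‖ + 1)) * ‖x‖ = ε * (‖x‖ / (2 * (‖x‖ + 1))) := by ring
      _ < ε * 1 := by
          apply mul_lt_mul_of_pos_left _ hε
          rw [div_lt_one (by positivity)]
          linarith [norm_nonneg x]
      _ = ε := mul_one ε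
  -- height one at 0
  obtain ⟨u₀, m₀, habs₀, hle₀⟩ := hht 0 h0'
  rw [dotZ_zero', hf0] at habs₀ hle₀
  simp only [zero_add, mul_one] at habs₀ hle₀
  have hm₀ : (m₀ : ℝ) = 1 ∨ (m₀ : ℝ) = -1 := (abs_eq (by norm_num)).mp habs₀
  have hu₀ : ∀ j, (u₀ j : ℝ) = 0 := by
    intro j
    have hp := hle₀ (Pi.single j δ) (haxmem j δ hδlt)
    have hn := hle₀ (Pi.single j (-δ)) (haxmem j (-δ) hδlt')
    rw [dotZ_single', haxval j δ hδlt] at hp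
    rw [dotZ_single', haxval j (-δ) hδlt'] at hn
    have h1 : δ * (u₀ j : ℝ) ≤ 0 := by linarith
    have h2 : -δ * (u₀ j : ℝ) ≤ 0 := by linarith
    nlinarith
  have hglob : ∀ y ∈ Box, (m₀ : ℝ) * f y ≤ (m₀ : ℝ) := by
    intro y hy
    have h1 := hle₀ y hy
    have hz : dotZ d y u₀ = 0 := by
      unfold dotZ
      exact Finset.sum_eq_zero fun i _ => by rw [hu₀ i, mul_zero]
    rw [hz] at h1
    linarith
  rcases hm₀ with hm₀ | hm₀
  · -- case A : f ≤ 1 on Box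
    have hle1 : ∀ y ∈ Box, f y ≤ 1 := by
      intro y hy
      have := hglob y hy
      rw [hm₀] at this; linarith
    intro x hx
    by_contra hne
    have hfx : f x < 1 := lt_of_le_of_ne (hle1 x hx) hne
    obtain ⟨t₁, ht₁0, ht₁1, hfx₁⟩ : ∃ t₁ : ℝ, 0 < t₁ ∧ t₁ < 1 ∧ f (t₁ • x) < 1 := by
      by_contra hno
      push_neg at hno
      obtain ⟨S, hproj, hgr⟩ := hicpa
      have hone : ∀ t : ℝ, 0 ≤ t → t < 1 → f (t • x) = 1 := by
        intro t ht0 ht1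
        rcases eq_or_lt_of_le ht0 with h | h
        · rw [← h]; simpa using hf0
        · exact le_antisymm (hle1 _ (hseg x hx t ht0 ht1.le)) (hno t h ht1)
      have hmemP : ∀ n : ℕ, (((1 - 1 / (n + 1 : ℝ)) • x, (1:ℝ)) : (Fin d → ℝ) × ℝ)
          ∈ convexHull ℝ (latticeEmbed d '' (S : Set ((Fin d → ℤ) × ℤ))) := by
        intro n
        have hn0 : (0:ℝ) ≤ 1 - 1 / (n + 1 : ℝ) := by
          have : 1 / (n + 1 : ℝ) ≤ 1 := by
            rw [div_le_one (by positivity)]; linarith [Nat.cast_nonneg (α := ℝ) n]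
          linarith
        have hn1 : (1 - 1 / (n + 1 : ℝ)) < 1 := by
          have : 0 < 1 / (n + 1 : ℝ) := by positivity
          linarith
        have := (hgr _ (hseg x hx _ hn0 hn1.le)).1
        rwa [hone _ hn0 hn1] at this
      have hclosed : IsClosed (convexHull ℝ (latticeEmbed d '' (S : Set ((Fin d → ℤ) × ℤ)))) :=
        (S.finite_toSet.image _).isClosed_convexHull (𝕜 := ℝ)
      have htend : Filter.Tendsto
          (fun n : ℕ => (((1 - 1 / (n + 1 : ℝ)) • x, (1:ℝ)) : (Fin d → ℝ) × ℝ))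
          Filter.atTop (nhds (x, 1)) := by
        have h1 : Filter.Tendsto (fun n : ℕ => (1 - 1 / (n + 1 : ℝ))) Filter.atTop (nhds 1) := by
          have h2 := Filter.Tendsto.const_sub (1:ℝ) tendsto_one_div_add_atTop_nhds_zero_nat
          simpa using h2
        have h3 : Filter.Tendsto (fun n : ℕ => (1 - 1 / (n + 1 : ℝ)) • x)
            Filter.atTop (nhds x) := by
          have := h1.smul_const x
          simpa using this
        exact h3.prodMk_nhds tendsto_const_nhds
      have hxP := hclosed.mem_of_tendsto htend (Filter.Eventually.of_forall hmemP)
      have : (1:ℝ) ≤ f x := (hgr x hx).2 hxP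
      linarith
    have hx₁ : t₁ • x ∈ Box := hseg x hx t₁ ht₁0.le ht₁1.le
    obtain ⟨u, m, habs, hle⟩ := hht (t₁ • x) hx₁
    obtain ⟨A, hAdef⟩ : ∃ A : ℝ, dotZ d x u = A := ⟨_, rfl⟩
    obtain ⟨F₁, hF₁def⟩ : ∃ F₁ : ℝ, f (t₁ • x) = F₁ := ⟨_, rfl⟩
    obtain ⟨c, hcdef⟩ : ∃ c : ℝ, t₁ * A + (m : ℝ) * F₁ = c := ⟨_, rfl⟩
    have hdx1 : dotZ d (t₁ • x) u = t₁ * A := by rw [dotZ_smul', hAdef]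
    rw [hdx1, hF₁def, hcdef] at habs hle
    have hc : c = 1 ∨ c = -1 := (abs_eq (by norm_num)).mp habs
    have hmc : (m : ℝ) ≤ c := by
      have h1 := hle 0 h0'
      rw [dotZ_zero', hf0] at h1
      linarith
    have hDx : A + (m : ℝ) * f x ≤ c := by
      have h1 := hle x hx
      rw [hAdef] at h1
      exact h1
    have hF₁lt : F₁ < 1 := by rw [← hF₁def]; exact hfx₁
    rcases lt_trichotomy m 0 with hm | hm | hm
    · -- m ≤ -1
      have hmr : (m : ℝ) ≤ -1 := by exact_mod_cast (by omega : m ≤ -1)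
      have hcc : (1 - t₁) * f 0 + t₁ * f x ≤ f ((1 - t₁) • (0 : Fin d → ℝ) + t₁ • x) :=
        icpa_concave hicpa h0' hx (by linarith) ht₁0.le (by ring)
      rw [smul_zero, zero_add, hf0, mul_one, hF₁def] at hcc
      have hkey : c ≤ (1 - t₁) * (m : ℝ) + t₁ * (A + (m : ℝ) * f x) := by
        have h1 : (m : ℝ) * F₁ ≤ (m : ℝ) * ((1 - t₁) + t₁ * f x) :=
          mul_le_mul_of_nonpos_left hcc (by linarith)
        calc c = t₁ * A + (m : ℝ) * F₁ := hcdef.symm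
          _ ≤ t₁ * A + (m : ℝ) * ((1 - t₁) + t₁ * f x) := by linarith
          _ = (1 - t₁) * (m : ℝ) + t₁ * (A + (m : ℝ) * f x) := by ring
      have e2 : 0 ≤ (1 - t₁) * (c - (m : ℝ)) := mul_nonneg (by linarith) (by linarith)
      have e3 : 0 ≤ t₁ * (c - (A + (m : ℝ) * f x)) := mul_nonneg ht₁0.le (by linarith)
      have e4 : (1 - t₁) * (c - (m : ℝ)) + t₁ * (c - (A + (m : ℝ) * f x)) ≤ 0 := by
        nlinarith [hkey]
      have hmeq : (m : ℝ) = c := by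
        have h5 : (1 - t₁) * (c - (m : ℝ)) = 0 := by linarith
        rcases mul_eq_zero.mp h5 with h | h
        · linarith
        · linarith
      have hAeq : A + (m : ℝ) * f x = c := by
        have h5 : t₁ * (c - (A + (m : ℝ) * f x)) = 0 := by linarith
        rcases mul_eq_zero.mp h5 with h | h
        · linarith
        · linarith
      have hcneg : c = -1 := by
        rcases hc with h | h
        · linarith
        · exact h
      have hmneg : (m : ℝ) = -1 := by linarith
      have hy2 : ((1:ℝ)/2) • x ∈ Box := hseg x hx _ (by norm_num) (by norm_num)
      have hp := hle _ hy2
      rw [dotZ_smul', hAdef, hmneg, hcneg] at hp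
      have hfy2 : f (((1:ℝ)/2) • x) ≤ 1 := hle1 _ hy2
      have hAle : A ≤ 0 := by nlinarith [hp, hfy2]
      obtain ⟨s, hs, hzmem⟩ := hnegmem x
      have hq := hle _ hzmem
      rw [dotZ_smul', hAdef, hmneg, hcneg] at hq
      have hfz : f ((-s) • x) ≤ 1 := hle1 _ hzmem
      have hAge : 0 ≤ A := by nlinarith [hq, hfz]
      have hA0 : A = 0 := le_antisymm hAle hAge
      rw [hA0, hmneg, hcneg] at hAeq
      have : f x = 1 := by linarith
      linarith
    · -- m = 0
      have hmz : (m : ℝ) = 0 := by exact_mod_cast congrArg (Int.cast : ℤ → ℝ) hm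
      have hc1 : c = 1 := by
        rcases hc with h | h
        · exact h
        · rw [hmz] at hmc; linarith
      have hcA : t₁ * A = c := by rw [← hcdef, hmz]; ring
      have hA1 : A ≤ 1 := by rw [hmz, hc1] at hDx; linarith
      nlinarith [hcA, hc1, hA1, ht₁0, ht₁1]
    · -- m ≥ 1
      have hmr : (1:ℝ) ≤ (m : ℝ) := by exact_mod_cast (by omega : (1:ℤ) ≤ m)
      have hc1 : c = 1 := by
        rcases hc with h | h
        · exact h
        · linarith
      have hm1 : (m : ℝ) = 1 := by linarith
      have hu : ∀ j, (u j : ℝ) = 0 := by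
        intro j
        have hp := hle (Pi.single j δ) (haxmem j δ hδlt)
        have hn := hle (Pi.single j (-δ)) (haxmem j (-δ) hδlt')
        rw [dotZ_single', haxval j δ hδlt, hm1, hc1] at hp
        rw [dotZ_single', haxval j (-δ) hδlt', hm1, hc1] at hn
        have h1 : δ * (u j : ℝ) ≤ 0 := by linarith
        have h2 : -δ * (u j : ℝ) ≤ 0 := by linarith
        nlinarith
      have hz : A = 0 := by
        rw [← hAdef]
        unfold dotZ
        exact Finset.sum_eq_zero fun i _ => by rw [hu i, mul_zero]
      rw [hz, hm1, hc1] at hcdef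
      have : F₁ = 1 := by linarith
      linarith
  · -- case B : f ≥ 1 on Box
    have hge1 : ∀ y ∈ Box, 1 ≤ f y := by
      intro y hy
      have := hglob y hy
      rw [hm₀] at this; linarith
    intro x hx
    refine le_antisymm ?_ (hge1 x hx)
    obtain ⟨s, hs, hzmem⟩ := hnegmem x
    have h1s : (0:ℝ) < 1 + s := by linarith
    have hab : s / (1 + s) + 1 / (1 + s) = 1 := by field_simp; ring
    have hcc := icpa_concave hicpa hx hzmem (le_of_lt (div_pos hs h1s))
      (le_of_lt (div_pos one_pos h1s)) hab
    have hzero : (s / (1 + s)) • x + (1 / (1 + s)) • ((-s) • x) = (0 : Fin d → ℝ) := by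
      rw [smul_smul]
      have h2 : (1 / (1 + s)) * (-s) = -(s / (1 + s)) := by field_simp
      rw [h2, neg_smul, add_neg_cancel]
    rw [hzero, hf0] at hcc
    have hz1 : 1 ≤ f ((-s) • x) := hge1 _ hzmem
    have ha : 0 < s / (1 + s) := div_pos hs h1s
    have hb : (0:ℝ) < 1 / (1 + s) := div_pos one_pos h1s
    nlinarith [mul_le_mul_of_nonneg_left hz1 hb.le, hcc, hab, ha]

end
end

section
/- Let d be a positive integer, let Box ⊆ ℝ^d be a full-dimensional lattice polytope with 0 in its interior, let j ∈ {1,…,d} and α > 0 be such that the point v = α·e_j (e_j the j-th standard basis vector) satisfies v ∈ Box and −v ∈ Box, and let f be an integral concave piecewise-affine function on Box which is at height one and satisfies f(0) > 0. Then: (1) if f(0) < 1 (i.e., f is non-integral), then f(−v) + f(v) ≤ 1; (2) if f(0) = 1 (i.e., f is integral) and the restriction of f to the segment from −v to v is not affine, then f(−v) + f(v) ≤ 2 − α; (3) if f(0) = 1 and the restriction of f to the segment from −v to v is affine, then f(−v) + f(v) = 2. -/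
open scoped BigOperators

noncomputable section

section AuxBound

variable {d : ℕ} {Box : Set (Fin d → ℝ)} {f : (Fin d → ℝ) → ℝ} {j : Fin d} {α : ℝ}
  {K : Set ((Fin d → ℝ) × ℝ)}

lemma aux_single_neg (j : Fin d) (α : ℝ) :
    (-Pi.single j α : Fin d → ℝ) = Pi.single j (-α) := by
  funext i
  by_cases hij : i = j
  · subst hij; simp
  · simp [Pi.single_eq_of_ne hij]

lemma aux_dot (j : Fin d) (t : ℝ) (u : Fin d → ℤ) :
    dotZ d (Pi.single j t) u = t * (u j : ℝ) := by
  simp only [dotZ]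
  rw [Finset.sum_eq_single j]
  · rw [Pi.single_eq_same]
  · intro i _ hij; rw [Pi.single_eq_of_ne hij, zero_mul]
  · intro h; exact absurd (Finset.mem_univ j) h

lemma aux_dot0 (u : Fin d → ℤ) : dotZ d (0 : Fin d → ℝ) u = 0 := by simp [dotZ]

lemma aux_single_comb {a b t : ℝ} (habt : (a - b) * α = t) :
    a • (Pi.single j α : Fin d → ℝ) + b • (Pi.single j (-α) : Fin d → ℝ) = Pi.single j t := by
  funext i
  by_cases hij : i = j
  · subst hij
    simp only [Pi.add_apply, Pi.smul_apply, Pi.single_eq_same, smul_eq_mul]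
    linarith [habt]
  · simp [Pi.single_eq_of_ne hij]

lemma aux_seg (hBoxConv : Convex ℝ Box) (hα : 0 < α)
    (hv : (Pi.single j α : Fin d → ℝ) ∈ Box) (hv' : (Pi.single j (-α) : Fin d → ℝ) ∈ Box)
    {t : ℝ} (ht : |t| ≤ α) : (Pi.single j t : Fin d → ℝ) ∈ Box := by
  obtain ⟨h1, h2⟩ := abs_le.mp ht
  have hc := hBoxConv hv hv' (a := (α + t)/(2*α)) (b := (α - t)/(2*α))
    (div_nonneg (by linarith) (by linarith)) (div_nonneg (by linarith) (by linarith))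
    (by field_simp; ring)
  rwa [aux_single_comb (a := (α + t)/(2*α)) (b := (α - t)/(2*α)) (t := t)
    (by have : (2*α) ≠ 0 := by positivity
        rw [div_sub_div_same, div_mul_eq_mul_div, div_eq_iff this]; ring)] at hc

lemma aux_segInt (hBoxConv : Convex ℝ Box) (h0 : (0 : Fin d → ℝ) ∈ interior Box) (hα : 0 < α)
    (hv : (Pi.single j α : Fin d → ℝ) ∈ Box) (hv' : (Pi.single j (-α) : Fin d → ℝ) ∈ Box)
    {t : ℝ} (ht : |t| < α) : (Pi.single j t : Fin d → ℝ) ∈ interior Box := by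
  obtain ⟨h1, h2⟩ := abs_lt.mp ht
  rcases le_or_gt 0 t with h | h
  · have hc := hBoxConv.combo_interior_self_mem_interior h0 hv
      (a := 1 - t/α) (b := t/α)
      (by rw [sub_pos]; exact (div_lt_one hα).mpr h2) (div_nonneg h hα.le) (by ring)
    have he : (1 - t/α) • (0 : Fin d → ℝ) + (t/α) • (Pi.single j α : Fin d → ℝ)
        = Pi.single j t := by
      funext i
      by_cases hij : i = j
      · subst hij
        simp only [Pi.add_apply, Pi.smul_apply, Pi.single_eq_same, smul_eq_mul,
          Pi.zero_apply, mul_zero]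
        field_simp
        ring
      · simp [Pi.single_eq_of_ne hij]
    rwa [he] at hc
  · have hc := hBoxConv.combo_interior_self_mem_interior h0 hv'
      (a := 1 + t/α) (b := -t/α)
      (by have hx : -1 < t/α := by
            rw [neg_lt, ← neg_div]; exact (div_lt_one hα).mpr (by linarith)
          linarith)
      (by rw [neg_div, neg_nonneg]; exact div_nonpos_of_nonpos_of_nonneg h.le hα.le)
      (by ring)
    have he : (1 + t/α) • (0 : Fin d → ℝ) + (-t/α) • (Pi.single j (-α) : Fin d → ℝ)
        = Pi.single j t := by
      funext i
      by_cases hij : i = j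
      · subst hij
        simp only [Pi.add_apply, Pi.smul_apply, Pi.single_eq_same, smul_eq_mul,
          Pi.zero_apply, mul_zero]
        field_simp
        ring
      · simp [Pi.single_eq_of_ne hij]
    rwa [he] at hc

lemma aux_conc (hKconv : Convex ℝ K) (hBoxConv : Convex ℝ Box)
    (hS2 : ∀ x ∈ Box, IsGreatest {t : ℝ | (x, t) ∈ K} (f x))
    {x y : Fin d → ℝ} (hx : x ∈ Box) (hy : y ∈ Box)
    {a b : ℝ} (ha : 0 ≤ a) (hb : 0 ≤ b) (hab : a + b = 1) :
    a * f x + b * f y ≤ f (a • x + b • y) := by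
  have hmem : a • x + b • y ∈ Box := hBoxConv hx hy ha hb hab
  have hcomb : a • ((x, f x) : (Fin d → ℝ) × ℝ) + b • ((y, f y) : (Fin d → ℝ) × ℝ) ∈ K :=
    hKconv (hS2 x hx).1 (hS2 y hy).1 ha hb hab
  have heq : a • ((x, f x) : (Fin d → ℝ) × ℝ) + b • ((y, f y) : (Fin d → ℝ) × ℝ)
      = (a • x + b • y, a * f x + b * f y) := by
    simp [Prod.ext_iff, smul_eq_mul]
  rw [heq] at hcomb
  exact (hS2 _ hmem).2 hcomb

/-- If the graph of `f` admits a lower affine support touching at an interior point of `Box`,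
then the support is exact on all of `Box`. -/
lemma aux_eq_of_lower (hKconv : Convex ℝ K) (hBoxConv : Convex ℝ Box)
    (hS2 : ∀ x ∈ Box, IsGreatest {t : ℝ | (x, t) ∈ K} (f x))
    {u : Fin d → ℤ} {m : ℤ} {E : ℝ} {x : Fin d → ℝ}
    (hxint : x ∈ interior Box) (hmR : (m : ℝ) < 0)
    (hsup : ∀ y ∈ Box, dotZ d y u + (m : ℝ) * f y ≤ E)
    (hxeq : dotZ d x u + (m : ℝ) * f x = E) :
    ∀ y ∈ Box, dotZ d y u + (m : ℝ) * f y = E := by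
  intro y hy
  refine le_antisymm (hsup y hy) ?_
  obtain ⟨r, hr, hball⟩ := Metric.mem_nhds_iff.mp (mem_interior_iff_mem_nhds.mp hxint)
  set δ := r / (‖x - y‖ + 1) with hδdef
  have hδ : 0 < δ := div_pos hr (by positivity)
  have h1δ : (0:ℝ) < 1 + δ := by positivity
  have hzmem : x + δ • (x - y) ∈ Box := by
    apply hball
    rw [Metric.mem_ball, dist_eq_norm, add_sub_cancel_left, norm_smul,
      Real.norm_eq_abs, abs_of_pos hδ, hδdef, div_mul_eq_mul_div,
      div_lt_iff₀ (by positivity)]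
    nlinarith [norm_nonneg (x - y), hr]
  set z := x + δ • (x - y) with hzdef
  have hcomb : (1/(1+δ)) • z + (δ/(1+δ)) • y = x := by
    rw [hzdef]
    have h1δ' : (1:ℝ) + δ ≠ 0 := ne_of_gt h1δ
    match_scalars <;> field_simp <;> ring
  have hcc := aux_conc hKconv hBoxConv hS2 hzmem hy
    (a := 1/(1+δ)) (b := δ/(1+δ)) (by positivity) (by positivity) (by field_simp)
  rw [hcomb] at hcc
  have h1 : f z + δ * f y ≤ (1+δ) * f x := by
    rw [div_mul_eq_mul_div, div_mul_eq_mul_div, ← add_div, div_le_iff₀ h1δ] at hcc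
    linarith [hcc]
  have hxeq' : (m:ℝ) * f x = E - dotZ d x u := by linarith [hxeq]
  have h2 : (m:ℝ) * ((1+δ) * f x) ≤ (m:ℝ) * (f z + δ * f y) :=
    mul_le_mul_of_nonpos_left h1 hmR.le
  rw [show (m:ℝ) * ((1+δ) * f x) = (1+δ) * ((m:ℝ) * f x) from by ring,
    show (m:ℝ) * (f z + δ * f y) = (m:ℝ) * f z + δ * ((m:ℝ) * f y) from by ring,
    hxeq'] at h2
  have hzsup : dotZ d z u + (m:ℝ) * f z ≤ E := hsup z hzmem
  have hdotz : dotZ d z u = (1+δ) * dotZ d x u - δ * dotZ d y u := by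
    rw [hzdef]
    simp only [dotZ, Pi.add_apply, Pi.smul_apply, Pi.sub_apply, smul_eq_mul]
    rw [Finset.mul_sum, Finset.mul_sum, ← Finset.sum_sub_distrib]
    exact Finset.sum_congr rfl fun i _ => by ring
  rw [hdotz] at hzsup
  have h9 : δ * (E - (dotZ d y u + (m:ℝ) * f y)) ≤ 0 := by nlinarith [h2, hzsup]
  nlinarith [h9, hδ]

/-- At any interior point of the segment, the graph of `f` has a supporting line through
`(0,1)` with integral slope. -/
lemma aux_support (hKconv : Convex ℝ K) (hBoxConv : Convex ℝ Box)
    (hS2 : ∀ x ∈ Box, IsGreatest {t : ℝ | (x, t) ∈ K} (f x))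
    (h0 : (0 : Fin d → ℝ) ∈ interior Box) (hα : 0 < α)
    (hv : (Pi.single j α : Fin d → ℝ) ∈ Box) (hv' : (Pi.single j (-α) : Fin d → ℝ) ∈ Box)
    (hht : AtHeightOne d Box f) (hf1 : f 0 = 1)
    (hnotaff : ¬ ∃ s c : ℝ, ∀ t : ℝ, |t| ≤ α → f (Pi.single j t) = s * t + c)
    {t : ℝ} (ht0 : t ≠ 0) (htlt : |t| < α) :
    ∃ k : ℤ, f (Pi.single j t) = 1 - (k:ℝ) * t ∧
      ∀ s : ℝ, |s| ≤ α → f (Pi.single j s) ≤ 1 - (k:ℝ) * s := by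
  have h0B : (0 : Fin d → ℝ) ∈ Box := interior_subset h0
  obtain ⟨u, m, habs, hsup⟩ := hht (Pi.single j t) (aux_seg hBoxConv hα hv hv' htlt.le)
  rw [aux_dot j t u] at habs hsup
  have hsup0 : (m:ℝ) ≤ t * (u j : ℝ) + (m:ℝ) * f (Pi.single j t) := by
    have h := hsup 0 h0B
    rw [aux_dot0, hf1] at h; linarith
  have hEle : t * (u j : ℝ) + (m:ℝ) * f (Pi.single j t) ≤ 1 := le_of_abs_le habs.le
  rcases lt_trichotomy m 0 with hm | hm | hm
  · -- m < 0 : f is affine on Box, contradiction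
    exfalso
    have hmR : (m:ℝ) < 0 := by exact_mod_cast hm
    have hmne : (m:ℝ) ≠ 0 := ne_of_lt hmR
    have hxint : (Pi.single j t : Fin d → ℝ) ∈ interior Box :=
      aux_segInt hBoxConv h0 hα hv hv' htlt
    have hxeq : dotZ d (Pi.single j t) u + (m:ℝ) * f (Pi.single j t)
        = t * (u j : ℝ) + (m:ℝ) * f (Pi.single j t) := by rw [aux_dot j t u]
    have heqall := aux_eq_of_lower hKconv hBoxConv hS2 hxint hmR hsup hxeq
    apply hnotaff
    refine ⟨-(u j : ℝ)/(m:ℝ), (t * (u j : ℝ) + (m:ℝ) * f (Pi.single j t))/(m:ℝ),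
      fun τ hτ => ?_⟩
    have hq := heqall (Pi.single j τ) (aux_seg hBoxConv hα hv hv' hτ)
    rw [aux_dot j τ u] at hq
    rw [show -(u j : ℝ)/(m:ℝ) * τ + (t * (u j : ℝ) + (m:ℝ) * f (Pi.single j t))/(m:ℝ)
        = (t * (u j : ℝ) + (m:ℝ) * f (Pi.single j t) - τ * (u j : ℝ))/(m:ℝ) from by ring,
      eq_div_iff hmne]
    linarith [hq]
  · -- m = 0 : impossible
    exfalso
    rw [hm] at hsup0 hsup hEle habs
    push_cast at hsup0 hsup hEle habs
    rw [zero_mul, add_zero] at habs hEle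
    have hE1 : t * (u j : ℝ) = 1 := by
      rcases (abs_eq (by norm_num : (0:ℝ) ≤ 1)).mp habs with h | h
      · exact h
      · exfalso; rw [zero_mul, add_zero, h] at hsup0; linarith
    rcases lt_or_gt_of_ne ht0 with htneg | htpos
    · have hu : (u j : ℝ) < 0 := by
        by_contra hcon
        push_neg at hcon
        have := mul_nonpos_iff.mpr (Or.inr ⟨htneg.le, hcon⟩)
        linarith [hE1]
      have h := hsup (Pi.single j (-α)) hv'
      rw [aux_dot j (-α) u] at h
      have hprod : (t + α) * (u j : ℝ) < 0 :=
        mul_neg_of_pos_of_neg (by linarith [(abs_lt.mp htlt).1]) hu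
      nlinarith [h, hE1]
    · have hu : (0:ℝ) < (u j : ℝ) := by
        by_contra hcon
        push_neg at hcon
        have := mul_nonpos_iff.mpr (Or.inl ⟨htpos.le, hcon⟩)
        linarith [hE1]
      have h := hsup (Pi.single j α) hv
      rw [aux_dot j α u] at h
      have hprod : (0:ℝ) < (α - t) * (u j : ℝ) :=
        mul_pos (by linarith [(abs_lt.mp htlt).2]) hu
      nlinarith [h, hE1]
  · -- m > 0
    have hmR : (1:ℝ) ≤ (m:ℝ) := by exact_mod_cast hm
    have hm1 : (m:ℝ) = 1 := le_antisymm (by linarith) hmR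
    rw [hm1] at hsup0 hsup hEle
    have hE1 : t * (u j : ℝ) + 1 * f (Pi.single j t) = 1 := le_antisymm hEle (by linarith)
    refine ⟨u j, by linarith [hE1], fun s hs => ?_⟩
    have h := hsup (Pi.single j s) (aux_seg hBoxConv hα hv hv' hs)
    rw [aux_dot j s u, hE1] at h
    linarith [h]

/-- The closed-graph limit argument at the endpoints of the segment. -/
lemma aux_line_mem (hKclosed : IsClosed K) {k : ℤ} {a b : ℝ} (hab : a < b)
    (hmem : ∀ t, t ∈ Set.Ioo a b → ((Pi.single j t : Fin d → ℝ), 1 - (k:ℝ)*t) ∈ K) :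
    ∀ t ∈ Set.Icc a b, ((Pi.single j t : Fin d → ℝ), 1 - (k:ℝ)*t) ∈ K := by
  intro t ht
  have hcont : Continuous (fun t : ℝ => ((Pi.single j t : Fin d → ℝ), 1 - (k:ℝ)*t)) := by
    apply Continuous.prodMk
    · apply continuous_pi
      intro i
      by_cases hij : i = j
      · subst hij; simp only [Pi.single_eq_same]; exact continuous_id
      · simp only [Pi.single_eq_of_ne hij]; exact continuous_const
    · exact continuous_const.sub (continuous_const.mul continuous_id)
  have hcl : IsClosed ((fun t : ℝ => ((Pi.single j t : Fin d → ℝ), 1 - (k:ℝ)*t)) ⁻¹' K) :=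
    hKclosed.preimage hcont
  have hsub : Set.Icc a b ⊆
      (fun t : ℝ => ((Pi.single j t : Fin d → ℝ), 1 - (k:ℝ)*t)) ⁻¹' K := by
    rw [← closure_Ioo (ne_of_lt hab)]
    exact hcl.closure_subset_iff.mpr hmem
  exact hsub ht

/-- Part (2) of the theorem, as a standalone lemma. -/
lemma aux_part2 (hKconv : Convex ℝ K) (hKclosed : IsClosed K) (hBoxConv : Convex ℝ Box)
    (hS2 : ∀ x ∈ Box, IsGreatest {t : ℝ | (x, t) ∈ K} (f x))
    (h0 : (0 : Fin d → ℝ) ∈ interior Box) (hα : 0 < α)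
    (hv : (Pi.single j α : Fin d → ℝ) ∈ Box) (hv' : (Pi.single j (-α) : Fin d → ℝ) ∈ Box)
    (hht : AtHeightOne d Box f) (hf1 : f 0 = 1)
    (hnotaff : ¬ ∃ s c : ℝ, ∀ t : ℝ, |t| ≤ α → f (Pi.single j t) = s * t + c) :
    f (Pi.single j (-α)) + f (Pi.single j α) ≤ 2 - α := by
  have hsupp := fun (t : ℝ) (ht0 : t ≠ 0) (htlt : |t| < α) =>
    aux_support hKconv hBoxConv hS2 h0 hα hv hv' hht hf1 hnotaff ht0 htlt
  have hhalfpos : 0 < α/2 := half_pos hα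
  have hhalf : |α/2| < α := by rw [abs_of_pos hhalfpos]; linarith
  have hhalf' : |(-(α/2))| < α := by rw [abs_neg]; exact hhalf
  obtain ⟨kp, hkp_eq, hkp_le⟩ := hsupp (α/2) (ne_of_gt hhalfpos) hhalf
  obtain ⟨km, hkm_eq, hkm_le⟩ := hsupp (-(α/2)) (neg_ne_zero.mpr (ne_of_gt hhalfpos)) hhalf'
  have hgp : ∀ t : ℝ, 0 < t → t < α → f (Pi.single j t) = 1 - (kp:ℝ) * t := by
    intro t ht0 htα
    obtain ⟨k, hk_eq, hk_le⟩ := hsupp t (ne_of_gt ht0) (by rw [abs_of_pos ht0]; exact htα)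
    have c1 : (k:ℝ) ≤ (kp:ℝ) := by
      have h := hk_le (α/2) hhalf.le
      rw [hkp_eq] at h
      nlinarith [h, hhalfpos]
    have c2 : (kp:ℝ) ≤ (k:ℝ) := by
      have h := hkp_le t (by rw [abs_of_pos ht0]; exact htα.le)
      rw [hk_eq] at h
      nlinarith [h, ht0]
    rw [hk_eq, le_antisymm c1 c2]
  have hgm : ∀ t : ℝ, -α < t → t < 0 → f (Pi.single j t) = 1 - (km:ℝ) * t := by
    intro t ht1 ht2
    obtain ⟨k, hk_eq, hk_le⟩ := hsupp t (ne_of_lt ht2) (abs_lt.mpr ⟨ht1, by linarith⟩)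
    have c1 : (km:ℝ) ≤ (k:ℝ) := by
      have h := hk_le (-(α/2)) hhalf'.le
      rw [hkm_eq] at h
      nlinarith [h, hhalfpos]
    have c2 : (k:ℝ) ≤ (km:ℝ) := by
      have h := hkm_le t (abs_le.mpr ⟨ht1.le, by linarith⟩)
      rw [hk_eq] at h
      nlinarith [h, ht2]
    rw [hk_eq, le_antisymm c2 c1]
  have hKmem : ∀ t : ℝ, |t| ≤ α → ((Pi.single j t : Fin d → ℝ), f (Pi.single j t)) ∈ K :=
    fun t ht => (hS2 _ (aux_seg hBoxConv hα hv hv' ht)).1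
  have hfv : f (Pi.single j α) = 1 - (kp:ℝ)*α := by
    refine le_antisymm (hkp_le α (by rw [abs_of_pos hα])) ?_
    have hm := aux_line_mem hKclosed hα (k := kp) (fun t ht => by
        rw [← hgp t ht.1 ht.2]
        exact hKmem t (by rw [abs_of_pos ht.1]; exact ht.2.le))
      α (Set.right_mem_Icc.mpr hα.le)
    exact (hS2 _ hv).2 hm
  have hfw : f (Pi.single j (-α)) = 1 + (km:ℝ)*α := by
    refine le_antisymm ?_ ?_
    · have h := hkm_le (-α) (by rw [abs_neg, abs_of_pos hα])
      linarith [h]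
    · have hm := aux_line_mem hKclosed (show -α < 0 by linarith) (k := km) (fun t ht => by
          rw [← hgm t ht.1 ht.2]
          exact hKmem t (abs_le.mpr ⟨ht.1.le, by linarith [ht.2]⟩))
        (-α) (Set.left_mem_Icc.mpr (by linarith))
      have h := (hS2 _ hv').2 hm
      linarith [h]
  have hkmkp : km ≤ kp := by
    have h := hkm_le (α/2) hhalf.le
    rw [hkp_eq] at h
    have h2 : (km:ℝ) ≤ (kp:ℝ) := by nlinarith [h, hhalfpos]
    exact_mod_cast h2
  rcases eq_or_lt_of_le hkmkp with heqk | hlt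
  · exfalso
    apply hnotaff
    refine ⟨-(kp:ℝ), 1, fun τ hτ => ?_⟩
    obtain ⟨hτ1, hτ2⟩ := abs_le.mp hτ
    rcases lt_trichotomy τ 0 with h | h | h
    · rcases eq_or_lt_of_le hτ1 with he | hlt2
      · rw [← he, hfw, ← heqk]; ring
      · rw [hgm τ hlt2 h, ← heqk]; ring
    · rw [h, Pi.single_zero, hf1]; ring
    · rcases eq_or_lt_of_le hτ2 with he | hlt2
      · rw [he, hfv]; ring
      · rw [hgp τ h hlt2]; ring
  · have h1 : (km:ℝ) + 1 ≤ (kp:ℝ) := by exact_mod_cast hlt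
    rw [hfv, hfw]
    nlinarith [mul_le_mul_of_nonneg_right h1 hα.le]

end AuxBound

/-- Bounds on `f(-v) + f(v)` for `v = α·e_j` with `±v ∈ Box`, according to whether `f` is
non-integral, integral but non-affine on the segment, or integral and affine. -/
theorem bound_on_sum_at_opposite_points
    (d : ℕ) (hd : 0 < d) (Box : Set (Fin d → ℝ)) (hlat : IsLatticePolytope d Box)
    (h0 : (0 : Fin d → ℝ) ∈ interior Box)
    (j : Fin d) (α : ℝ) (hα : 0 < α)
    (hv : (Pi.single j α : Fin d → ℝ) ∈ Box) (hv' : (-Pi.single j α : Fin d → ℝ) ∈ Box)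
    (f : (Fin d → ℝ) → ℝ) (hicpa : IsICPA d Box f) (hht : AtHeightOne d Box f)
    (hf0 : 0 < f 0) :
    (f 0 < 1 → f (-Pi.single j α) + f (Pi.single j α) ≤ 1) ∧
    (f 0 = 1 → ¬ (∃ s c : ℝ, ∀ t : ℝ, |t| ≤ α → f (Pi.single j t) = s * t + c) →
      f (-Pi.single j α) + f (Pi.single j α) ≤ 2 - α) ∧
    (f 0 = 1 → (∃ s c : ℝ, ∀ t : ℝ, |t| ≤ α → f (Pi.single j t) = s * t + c) →
      f (-Pi.single j α) + f (Pi.single j α) = 2) := by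
  classical
  obtain ⟨S, hS1, hS2⟩ := hicpa
  set K := convexHull ℝ (latticeEmbed d '' (S : Set ((Fin d → ℤ) × ℤ))) with hKdef
  have hKconv : Convex ℝ K := convex_convexHull ℝ _
  have hKclosed : IsClosed K :=
    (((S : Set ((Fin d → ℤ) × ℤ)).toFinite).image _).isClosed_convexHull (𝕜 := ℝ)
  obtain ⟨T, hT⟩ := hlat
  have hBoxConv : Convex ℝ Box := by rw [hT]; exact convex_convexHull ℝ _
  have h0B : (0 : Fin d → ℝ) ∈ Box := interior_subset h0
  rw [aux_single_neg] at hv' ⊢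
  refine ⟨?_, ?_, ?_⟩
  · -- Part (1): non-integral case
    intro hf01
    obtain ⟨u0, m0, habs0, _⟩ := hht 0 h0B
    rw [aux_dot0, zero_add, abs_mul, abs_of_pos hf0] at habs0
    have hm0ne : (m0 : ℝ) ≠ 0 := by
      intro h; rw [h, abs_zero, zero_mul] at habs0; exact one_ne_zero habs0.symm
    have h1 : (1:ℝ) < |(m0:ℝ)| := by
      rw [eq_div_of_mul_eq hf0.ne' habs0]
      exact (one_lt_div hf0).mpr hf01
    have h2 : (1:ℤ) < |m0| := by exact_mod_cast h1
    have h3 : (2:ℝ) ≤ |(m0:ℝ)| := by exact_mod_cast h2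
    have h4 : f 0 ≤ 1/2 := by
      nlinarith [mul_nonneg (by linarith : (0:ℝ) ≤ |(m0:ℝ)| - 2) hf0.le]
    have h5 := aux_conc hKconv hBoxConv hS2 hv hv'
      (a := 1/2) (b := 1/2) (by norm_num) (by norm_num) (by norm_num)
    have h6 : (1/2 : ℝ) • (Pi.single j α : Fin d → ℝ)
        + (1/2 : ℝ) • (Pi.single j (-α) : Fin d → ℝ) = 0 := by
      rw [aux_single_comb (a := (1/2:ℝ)) (b := (1/2:ℝ)) (t := 0) (by ring)]
      exact Pi.single_zero j
    rw [h6] at h5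
    linarith
  · -- Part (2): integral, non-affine case
    intro hf1 hnotaff
    exact aux_part2 hKconv hKclosed hBoxConv hS2 h0 hα hv hv' hht hf1 hnotaff
  · -- Part (3): integral, affine case
    intro hf1 haff
    obtain ⟨s, c, hsc⟩ := haff
    have h0' := hsc 0 (by rw [abs_zero]; exact hα.le)
    rw [Pi.single_zero, hf1] at h0'
    have hA := hsc α (by rw [abs_of_pos hα])
    have hB := hsc (-α) (by rw [abs_neg, abs_of_pos hα])
    rw [hA, hB]
    linarith [h0']

end
end
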